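/- arXiv:1502.03505 — 3 statements merged into one kernel-verified Lean document; each statement's English description precedes it below -/
import Mathlib

section
/- (Equality case of the exponential metric increasing property.) If A and B are d × d real symmetric positive definite matrices that commute (AB = BA), i.e. A, B and the identity lie on a common geodesic, then the affine-invariant Riemannian distance equals the LogEuclidean distance: δ_r(A,B) = ‖log A − log B‖_F. -/
open Matrix
open scoped Classical

-- `mexp` is the matrix exponential of a real `d × d` matrix.
noncomputable def mexp {d : ℕ} (A : Matrix (Fin d) (Fin d) ℝ) : Matrix (Fin d) (Fin d) ℝ :=
  NormedSpace.exp A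

-- `mlog A` is the principal matrix logarithm: the unique symmetric matrix whose
-- matrix exponential is `A`, when `A` is symmetric positive definite.
noncomputable def mlog {d : ℕ} (A : Matrix (Fin d) (Fin d) ℝ) : Matrix (Fin d) (Fin d) ℝ :=
  if h : ∃ S : Matrix (Fin d) (Fin d) ℝ, S.IsSymm ∧ mexp S = A then h.choose else 0

-- `A^{1/2} = exp((1/2) log A)`.
noncomputable def msqrt {d : ℕ} (A : Matrix (Fin d) (Fin d) ℝ) : Matrix (Fin d) (Fin d) ℝ :=
  mexp ((1/2 : ℝ) • mlog A)

-- `A^{-1/2} = exp(-(1/2) log A)`.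
noncomputable def minvsqrt {d : ℕ} (A : Matrix (Fin d) (Fin d) ℝ) : Matrix (Fin d) (Fin d) ℝ :=
  mexp (-(1/2 : ℝ) • mlog A)

-- Frobenius norm.
noncomputable def frob {d : ℕ} (A : Matrix (Fin d) (Fin d) ℝ) : ℝ :=
  Real.sqrt ((Aᵀ * A).trace)

-- Affine-invariant Riemannian (AIRM) distance `δ_r(A,B) = ‖log(A^{-1/2} B A^{-1/2})‖_F`.
noncomputable def airm {d : ℕ} (A B : Matrix (Fin d) (Fin d) ℝ) : ℝ :=
  frob (mlog (minvsqrt A * B * minvsqrt A))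

-- Affine-invariant inner product at `G`: `⟨S,S'⟩_G = tr(G⁻¹ S G⁻¹ S')`.
noncomputable def innG {d : ℕ} (G S S' : Matrix (Fin d) (Fin d) ℝ) : ℝ :=
  (G⁻¹ * S * G⁻¹ * S').trace

-- Norm induced by the affine-invariant inner product at `G`.
noncomputable def normG {d : ℕ} (G S : Matrix (Fin d) (Fin d) ℝ) : ℝ :=
  Real.sqrt (innG G S S)

-- Logarithmic map at `G`: `log_G(A) = G^{1/2} log(G^{-1/2} A G^{-1/2}) G^{1/2}`.
noncomputable def logMap {d : ℕ} (G A : Matrix (Fin d) (Fin d) ℝ) : Matrix (Fin d) (Fin d) ℝ :=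
  msqrt G * mlog (minvsqrt G * A * minvsqrt G) * msqrt G

-- Exponential map at `G`: `exp_G(S) = G^{1/2} exp(G^{-1/2} S G^{-1/2}) G^{1/2}`.
noncomputable def expMap {d : ℕ} (G S : Matrix (Fin d) (Fin d) ℝ) : Matrix (Fin d) (Fin d) ℝ :=
  msqrt G * mexp (minvsqrt G * S * minvsqrt G) * msqrt G

-- Symmetric part `sym(M) = (M + Mᵀ)/2`.
noncomputable def symPart {d : ℕ} (M : Matrix (Fin d) (Fin d) ℝ) : Matrix (Fin d) (Fin d) ℝ :=
  (1/2 : ℝ) • (M + Mᵀ)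

section Aux

open Polynomial

variable {d : ℕ}

private lemma my_conj_pow {U V M : Matrix (Fin d) (Fin d) ℝ} (hUV : U * V = 1)
    (hVU : V * U = 1) (n : ℕ) : (U * M * V) ^ n = U * M ^ n * V := by
  induction n with
  | zero => simp [hUV]
  | succ n ih =>
      rw [pow_succ, ih, pow_succ]
      calc U * M ^ n * V * (U * M * V) = U * M ^ n * (V * U) * M * V := by
            simp only [Matrix.mul_assoc]
        _ = U * (M ^ n * M) * V := by rw [hVU]; simp only [Matrix.mul_one, Matrix.mul_assoc]

private lemma my_aeval_conj {U V M : Matrix (Fin d) (Fin d) ℝ} (hUV : U * V = 1)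
    (hVU : V * U = 1) (p : ℝ[X]) : aeval (U * M * V) p = U * aeval M p * V := by
  induction p using Polynomial.induction_on' with
  | add p q hp hq => rw [map_add, map_add, hp, hq, Matrix.mul_add, Matrix.add_mul]
  | monomial n a =>
      rw [aeval_monomial, aeval_monomial, my_conj_pow hUV hVU]
      simp [Algebra.algebraMap_eq_smul_one, smul_mul_assoc, mul_smul_comm]

private lemma my_aeval_diagonal (v : Fin d → ℝ) (p : ℝ[X]) :
    aeval (diagonal v) p = diagonal (fun i => p.eval (v i)) := by
  have h2 : aeval v p = fun i => p.eval (v i) := by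
    funext i
    have := Polynomial.aeval_algHom_apply (Pi.evalAlgHom ℝ (fun _ => ℝ) i) v p
    simpa using this.symm
  rw [show (diagonal v : Matrix (Fin d) (Fin d) ℝ) = diagonalAlgHom ℝ v from rfl,
    Polynomial.aeval_algHom_apply, h2]
  rfl

private lemma my_symm_herm {S : Matrix (Fin d) (Fin d) ℝ} (hS : S.IsSymm) : S.IsHermitian := by
  rwa [Matrix.IsHermitian, conjTranspose_eq_transpose_of_trivial]

private lemma my_herm_symm {S : Matrix (Fin d) (Fin d) ℝ} (hS : S.IsHermitian) : S.IsSymm := by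
  rwa [Matrix.IsHermitian, conjTranspose_eq_transpose_of_trivial] at hS

private lemma my_mexp_conj {U V M : Matrix (Fin d) (Fin d) ℝ} (hUV : U * V = 1)
    (hVU : V * U = 1) : mexp (U * M * V) = U * mexp M * V := by
  have hunit : IsUnit U := ⟨⟨U, V, hUV, hVU⟩, rfl⟩
  have hV : V = U⁻¹ := (Matrix.inv_eq_left_inv hVU).symm
  rw [hV]
  exact Matrix.exp_conj U M hunit

private lemma my_mexp_diagonal (v : Fin d → ℝ) :
    mexp (diagonal v) = diagonal (fun i => Real.exp (v i)) := by
  show NormedSpace.exp (diagonal v) = _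
  rw [Matrix.exp_diagonal, Pi.exp_def]
  congr 1
  funext i
  rw [Real.exp_eq_exp_ℝ]

-- spectral theorem over ℝ, repackaged
private lemma my_spectral {S : Matrix (Fin d) (Fin d) ℝ} (hS : S.IsHermitian) :
    S = (hS.eigenvectorUnitary : Matrix (Fin d) (Fin d) ℝ) * diagonal hS.eigenvalues *
      star (hS.eigenvectorUnitary : Matrix (Fin d) (Fin d) ℝ) := by
  have := hS.spectral_theorem
  simpa [RCLike.ofReal_real_eq_id] using this

private lemma my_exists_aeval_mexp {S : Matrix (Fin d) (Fin d) ℝ} (hS : S.IsHermitian) :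
    ∃ p : ℝ[X], aeval (mexp S) p = S := by
  classical
  set U : Matrix (Fin d) (Fin d) ℝ := (hS.eigenvectorUnitary : Matrix (Fin d) (Fin d) ℝ) with hU
  have hU1 : U * star U = 1 := (Matrix.mem_unitaryGroup_iff).mp hS.eigenvectorUnitary.2
  have hU2 : star U * U = 1 := (Matrix.mem_unitaryGroup_iff').mp hS.eigenvectorUnitary.2
  have hspec : S = U * diagonal hS.eigenvalues * star U := my_spectral hS
  have hexp : mexp S = U * diagonal (fun i => Real.exp (hS.eigenvalues i)) * star U := by
    conv_lhs => rw [hspec]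
    rw [my_mexp_conj hU1 hU2, my_mexp_diagonal]
  set s : Finset ℝ := Finset.image (fun i => Real.exp (hS.eigenvalues i)) Finset.univ with hs
  refine ⟨Lagrange.interpolate s id Real.log, ?_⟩
  rw [hexp, my_aeval_conj hU1 hU2, my_aeval_diagonal]
  have heval : (fun i => Polynomial.eval (Real.exp (hS.eigenvalues i))
      (Lagrange.interpolate s id Real.log)) = hS.eigenvalues := by
    funext i
    have hi : Real.exp (hS.eigenvalues i) ∈ s := by
      rw [hs]; exact Finset.mem_image_of_mem _ (Finset.mem_univ i)
    have := Lagrange.eval_interpolate_at_node Real.log (Set.injOn_id _) hi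
    simpa [Real.log_exp] using this
  rw [heval, ← hspec]

private lemma my_herm_mexp_eq_one {R : Matrix (Fin d) (Fin d) ℝ} (hR : R.IsHermitian)
    (h : mexp R = 1) : R = 0 := by
  set U : Matrix (Fin d) (Fin d) ℝ := (hR.eigenvectorUnitary : Matrix (Fin d) (Fin d) ℝ) with hU
  have hU1 : U * star U = 1 := (Matrix.mem_unitaryGroup_iff).mp hR.eigenvectorUnitary.2
  have hU2 : star U * U = 1 := (Matrix.mem_unitaryGroup_iff').mp hR.eigenvectorUnitary.2
  have hspec : R = U * diagonal hR.eigenvalues * star U := my_spectral hR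
  have hexp : U * diagonal (fun i => Real.exp (hR.eigenvalues i)) * star U = 1 := by
    rw [← my_mexp_diagonal, ← my_mexp_conj hU1 hU2, ← hspec, h]
  have hdiag : diagonal (fun i => Real.exp (hR.eigenvalues i)) = 1 := by
    set Dm : Matrix (Fin d) (Fin d) ℝ := diagonal (fun i => Real.exp (hR.eigenvalues i)) with hDm
    calc Dm = (star U * U) * Dm * (star U * U) := by rw [hU2]; simp
      _ = star U * (U * Dm * star U) * U := by simp only [Matrix.mul_assoc]
      _ = star U * (1 : Matrix (Fin d) (Fin d) ℝ) * U := by rw [hexp]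
      _ = 1 := by rw [Matrix.mul_one, hU2]
  have heig : ∀ i, hR.eigenvalues i = 0 := by
    intro i
    have := congrFun (congrFun hdiag i) i
    simp [diagonal, Matrix.one_apply] at this
    exact Real.exp_injective (by simpa [Real.exp_zero] using this)
  have : diagonal hR.eigenvalues = 0 := by
    rw [show hR.eigenvalues = fun _ => (0:ℝ) from funext heig]
    simp [diagonal_zero]
  rw [hspec, this]
  simp

private lemma my_mexp_inj {S T : Matrix (Fin d) (Fin d) ℝ} (hS : S.IsHermitian)
    (hT : T.IsHermitian) (h : mexp S = mexp T) : S = T := by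
  obtain ⟨p, hp⟩ := my_exists_aeval_mexp hS
  obtain ⟨q, hq⟩ := my_exists_aeval_mexp hT
  have hc : Commute S T := by
    rw [← hp, ← hq, h]
    show _ * _ = _ * _
    rw [← _root_.map_mul, mul_comm p q, _root_.map_mul]
  have h1 : mexp (S - T) = 1 := by
    show NormedSpace.exp (S - T) = 1
    rw [sub_eq_add_neg, Matrix.exp_add_of_commute S (-T) hc.neg_right]
    have : NormedSpace.exp S = NormedSpace.exp T := h
    rw [this, ← Matrix.exp_add_of_commute T (-T) (Commute.refl T).neg_right, add_neg_cancel,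
      NormedSpace.exp_zero]
  have := my_herm_mexp_eq_one (hS.sub hT) h1
  exact sub_eq_zero.mp this

private lemma my_mlog_eq {A S : Matrix (Fin d) (Fin d) ℝ} (hS : S.IsSymm) (h : mexp S = A) :
    mlog A = S := by
  have hex : ∃ S' : Matrix (Fin d) (Fin d) ℝ, S'.IsSymm ∧ mexp S' = A := ⟨S, hS, h⟩
  rw [mlog, dif_pos hex]
  exact my_mexp_inj (my_symm_herm hex.choose_spec.1) (my_symm_herm hS)
    (hex.choose_spec.2.trans h.symm)

private lemma my_posDef_log {A : Matrix (Fin d) (Fin d) ℝ} (hA : A.PosDef) :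
    (mlog A).IsSymm ∧ mexp (mlog A) = A := by
  have hH : A.IsHermitian := hA.1
  set U : Matrix (Fin d) (Fin d) ℝ := (hH.eigenvectorUnitary : Matrix (Fin d) (Fin d) ℝ) with hU
  have hU1 : U * star U = 1 := (Matrix.mem_unitaryGroup_iff).mp hH.eigenvectorUnitary.2
  have hU2 : star U * U = 1 := (Matrix.mem_unitaryGroup_iff').mp hH.eigenvectorUnitary.2
  have hspec : A = U * diagonal hH.eigenvalues * star U := my_spectral hH
  set S : Matrix (Fin d) (Fin d) ℝ :=
    U * diagonal (fun i => Real.log (hH.eigenvalues i)) * star U with hSdef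
  have hSherm : S.IsHermitian := by
    rw [hSdef, show star U = Uᴴ from rfl]
    exact Matrix.isHermitian_mul_mul_conjTranspose U (Matrix.isHermitian_diagonal _)
  have hSsymm : S.IsSymm := my_herm_symm hSherm
  have hSexp : mexp S = A := by
    rw [hSdef, my_mexp_conj hU1 hU2, my_mexp_diagonal]
    have : (fun i => Real.exp (Real.log (hH.eigenvalues i))) = hH.eigenvalues := by
      funext i
      exact Real.exp_log (hA.eigenvalues_pos i)
    rw [this, ← hspec]
  rw [my_mlog_eq hSsymm hSexp]
  exact ⟨hSsymm, hSexp⟩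

private lemma my_commute_aeval {x y : Matrix (Fin d) (Fin d) ℝ} (h : Commute x y) (p : ℝ[X]) :
    Commute (aeval x p) y := by
  induction p using Polynomial.induction_on' with
  | add p q hp hq => rw [map_add]; exact hp.add_left hq
  | monomial n a =>
      rw [aeval_monomial]
      exact Commute.mul_left (Algebra.commutes a y) (h.pow_left n)

private lemma my_frob_sub_comm (S T : Matrix (Fin d) (Fin d) ℝ) : frob (T - S) = frob (S - T) := by
  unfold frob
  rw [← neg_sub S T, transpose_neg, neg_mul_neg]

end Aux

/-- Equality case of the exponential metric increasing property: if `A` and `B`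
commute then `δ_r(A,B) = ‖log A − log B‖_F`. -/
theorem stmt2 (d : ℕ) (A B : Matrix (Fin d) (Fin d) ℝ)
    (hA : A.PosDef) (hB : B.PosDef) (hcomm : A * B = B * A) :
    airm A B = frob (mlog A - mlog B) := by
  classical
  obtain ⟨hSsym, hSexp⟩ := my_posDef_log hA
  obtain ⟨hTsym, hTexp⟩ := my_posDef_log hB
  set S := mlog A with hSdef
  set T := mlog B with hTdef
  obtain ⟨p, hp⟩ := my_exists_aeval_mexp (my_symm_herm hSsym)
  obtain ⟨q, hq⟩ := my_exists_aeval_mexp (my_symm_herm hTsym)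
  rw [hSexp] at hp
  rw [hTexp] at hq
  have hAB : Commute A B := hcomm
  have hST : Commute S T := by
    rw [← hp, ← hq]
    exact ((my_commute_aeval ((my_commute_aeval hAB p).symm) q).symm)
  have hSB : Commute S B := by
    rw [← hTexp]
    exact hST.exp_right
  have hcB : Commute (minvsqrt A) B := by
    show Commute (NormedSpace.exp (-(1/2 : ℝ) • S)) B
    exact (hSB.smul_left (-(1/2 : ℝ))).exp_left
  have h2 : minvsqrt A * minvsqrt A = mexp (-S) := by
    show NormedSpace.exp (-(1/2 : ℝ) • S) * NormedSpace.exp (-(1/2 : ℝ) • S)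
      = NormedSpace.exp (-S)
    rw [← Matrix.exp_add_of_commute (-(1/2 : ℝ) • S) (-(1/2 : ℝ) • S) (Commute.refl _)]
    congr 1
    rw [← add_smul]
    norm_num
  have key : minvsqrt A * B * minvsqrt A = mexp (T - S) := by
    rw [mul_assoc, ← hcB.eq, ← mul_assoc, h2, ← hTexp]
    show NormedSpace.exp (-S) * NormedSpace.exp T = NormedSpace.exp (T - S)
    rw [← Matrix.exp_add_of_commute (-S) T hST.neg_left, neg_add_eq_sub]
  have hsub : (T - S).IsSymm := by
    show (T - S)ᵀ = T - S
    rw [transpose_sub, hTsym, hSsym]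
  have hairm : airm A B = frob (T - S) := by
    unfold airm
    rw [key, my_mlog_eq hsub rfl]
  rw [hairm, my_frob_sub_comm]
end

section
/- (Theorem 2, generalized exponential metric increasing property.) For any d × d real symmetric positive definite matrices A, B and G, the affine-invariant Riemannian distance dominates the G-parameterized LogEuclidean distance: δ_r(A,B) ≥ ‖log_G(A) − log_G(B)‖_G, where log_G(A) = G^{1/2} log(G^{-1/2} A G^{-1/2}) G^{1/2} and ‖S‖_G = √(tr(G^{-1} S G^{-1} S)) is the norm induced by the affine-invariant inner product on the tangent space at G. -/
open Matrix
open scoped Classical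

lemma sinh_le_mul_cosh {u : ℝ} (hu : 0 ≤ u) : Real.sinh u ≤ u * Real.cosh u := by
  have hd : ∀ x : ℝ, HasDerivAt (fun y => y * Real.cosh y - Real.sinh y)
      (1 * Real.cosh x + x * Real.sinh x - Real.cosh x) x := fun x =>
    ((hasDerivAt_id x).mul (Real.hasDerivAt_cosh x)).sub (Real.hasDerivAt_sinh x)
  have hmono : MonotoneOn (fun y => y * Real.cosh y - Real.sinh y) (Set.Ici (0:ℝ)) := by
    refine monotoneOn_of_deriv_nonneg (convex_Ici 0)
      (((continuous_id.mul Real.continuous_cosh).sub Real.continuous_sinh).continuousOn)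
      (fun x _ => (hd x).differentiableAt.differentiableWithinAt) ?_
    intro x hx
    rw [interior_Ici] at hx
    rw [(hd x).deriv]
    have hx' : (0:ℝ) < x := hx
    nlinarith [(Real.sinh_pos_iff.mpr hx').le]
  have := hmono (Set.mem_Ici.mpr le_rfl) (Set.mem_Ici.mpr hu) hu
  simp only [Real.sinh_zero, Real.cosh_zero, zero_mul, sub_zero, mul_zero, zero_sub,
    neg_zero] at this
  linarith

lemma abs_two_sinh_half_le {x t : ℝ} (hxt : |x| ≤ t) :
    |2 * Real.sinh (x / 2)| ≤ |x| * Real.cosh (t / 2) := by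
  have hx : |2 * Real.sinh (x/2)| = 2 * Real.sinh (|x|/2) := by
    rcases abs_cases x with ⟨h1, h2⟩ | ⟨h1, h2⟩
    · rw [h1, abs_of_nonneg]
      have : (0:ℝ) ≤ Real.sinh (x/2) := Real.sinh_nonneg_iff.mpr (by linarith)
      linarith
    · rw [h1, abs_of_nonpos]
      · rw [neg_div, Real.sinh_neg]; ring
      · have : Real.sinh (x/2) ≤ 0 := Real.sinh_nonpos_iff.mpr (by linarith)
        linarith
  rw [hx]
  have h0 : (0:ℝ) ≤ t := le_trans (abs_nonneg x) hxt
  have h1 : Real.sinh (|x|/2) ≤ (|x|/2) * Real.cosh (|x|/2) :=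
    sinh_le_mul_cosh (by positivity)
  have h2 : Real.cosh (|x|/2) ≤ Real.cosh (t/2) := by
    rw [Real.cosh_le_cosh]
    have e1 : |(|x|/2)| = |x|/2 := abs_of_nonneg (by positivity)
    have e2 : |t/2| = t/2 := abs_of_nonneg (by positivity)
    rw [e1, e2]
    linarith
  nlinarith [abs_nonneg x, Real.cosh_pos (|x|/2)]

lemma abs_le_abs_two_sinh_half (x : ℝ) : |x| ≤ |2 * Real.sinh (x / 2)| := by
  rcases le_or_gt 0 x with h | h
  · have hs : (0:ℝ) ≤ Real.sinh (x/2) := Real.sinh_nonneg_iff.mpr (by linarith)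
    rw [abs_of_nonneg h, abs_of_nonneg (by linarith)]
    have := Real.self_le_sinh_iff.mpr (show (0:ℝ) ≤ x/2 by linarith)
    linarith
  · have hs : Real.sinh (x/2) < 0 := Real.sinh_neg_iff.mpr (by linarith)
    rw [abs_of_neg h, abs_of_neg (by linarith)]
    have := Real.self_le_sinh_iff.mpr (show (0:ℝ) ≤ -x/2 by linarith)
    rw [show -x/2 = -(x/2) by ring, Real.sinh_neg] at this
    linarith

lemma exp_half_diff (x y : ℝ) :
    Real.exp (-(x/2)) * (Real.exp x - Real.exp y) * Real.exp (-(y/2))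
      = 2 * Real.sinh ((x - y)/2) := by
  have e1 : Real.exp (-(x/2)) * Real.exp x * Real.exp (-(y/2)) = Real.exp ((x-y)/2) := by
    rw [← Real.exp_add, ← Real.exp_add]; congr 1; ring
  have e2 : Real.exp (-(x/2)) * Real.exp y * Real.exp (-(y/2)) = Real.exp (-((x-y)/2)) := by
    rw [← Real.exp_add, ← Real.exp_add]; congr 1; ring
  rw [Real.sinh_eq]
  nlinarith [e1, e2]

lemma exp_diff_sq (a b : ℝ) :
    (Real.exp a - Real.exp b) * Real.exp (-a) * ((Real.exp a - Real.exp b) * Real.exp (-b))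
      = (2 * Real.sinh ((a - b) / 2))^2 := by
  have h := exp_half_diff a b
  have ha : Real.exp (-(a/2)) * Real.exp (-(a/2)) = Real.exp (-a) := by
    rw [← Real.exp_add]; congr 1; ring
  have hb : Real.exp (-(b/2)) * Real.exp (-(b/2)) = Real.exp (-b) := by
    rw [← Real.exp_add]; congr 1; ring
  calc (Real.exp a - Real.exp b) * Real.exp (-a) * ((Real.exp a - Real.exp b) * Real.exp (-b))
      = (Real.exp (-(a/2)) * (Real.exp a - Real.exp b) * Real.exp (-(b/2)))^2 := by
        rw [← ha, ← hb]; ring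
    _ = (2 * Real.sinh ((a - b) / 2))^2 := by rw [h]

variable {d : ℕ}

local notation "Mat" => Matrix (Fin d) (Fin d) ℝ

lemma mexp_zero : mexp (0 : Mat) = 1 := NormedSpace.exp_zero

lemma mexp_transpose (A : Mat) : (mexp A)ᵀ = mexp Aᵀ := (Matrix.exp_transpose A).symm

lemma mexp_isSymm {A : Mat} (hA : A.IsSymm) : (mexp A).IsSymm := Matrix.IsSymm.exp hA

lemma mexp_add_of_commute {A B : Mat} (h : Commute A B) :
    mexp (A + B) = mexp A * mexp B := Matrix.exp_add_of_commute A B h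

lemma mexp_smul_mul_mexp_smul (a b : ℝ) (L : Mat) :
    mexp (a • L) * mexp (b • L) = mexp ((a + b) • L) := by
  rw [add_smul, mexp_add_of_commute ((Commute.refl L).smul_left a |>.smul_right b)]

lemma mexp_mul_mexp_neg (A : Mat) : mexp A * mexp (-A) = 1 := by
  have h := mexp_smul_mul_mexp_smul (1:ℝ) (-1) A
  simpa [mexp_zero] using h

lemma mexp_neg_mul_mexp (A : Mat) : mexp (-A) * mexp A = 1 := by
  have h := mexp_smul_mul_mexp_smul (-1:ℝ) 1 A
  simpa [mexp_zero] using h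

lemma mexp_isUnit (A : Mat) : IsUnit (mexp A) := Matrix.isUnit_exp A

lemma mexp_conj_orth {U : Mat} (hU : U * Uᵀ = 1) (A : Mat) :
    mexp (U * A * Uᵀ) = U * mexp A * Uᵀ := by
  have hU' : Uᵀ * U = 1 := mul_eq_one_comm.mp hU
  have hU'' : IsUnit U := ⟨⟨U, Uᵀ, hU, hU'⟩, rfl⟩
  have hinv : U⁻¹ = Uᵀ := Matrix.inv_eq_right_inv hU
  rw [← hinv]
  exact Matrix.exp_conj U A hU''

lemma mexp_diagonal (v : Fin d → ℝ) :
    mexp (Matrix.diagonal v) = Matrix.diagonal (fun i => Real.exp (v i)) := by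
  unfold mexp
  rw [Matrix.exp_diagonal v, Pi.exp_def]
  simp [Real.exp_eq_exp_ℝ]

lemma isHermitian_of_isSymm {S : Mat} (hS : S.IsSymm) : S.IsHermitian := by
  rw [Matrix.IsHermitian, Matrix.conjTranspose_eq_transpose_of_trivial]
  exact hS

lemma isSymm_of_isHermitian {S : Mat} (hS : S.IsHermitian) : S.IsSymm := by
  rw [Matrix.IsSymm, ← Matrix.conjTranspose_eq_transpose_of_trivial]
  exact hS

/-- Spectral decomposition of a real symmetric matrix, packaged. -/
lemma exists_spectral {S : Mat} (hS : S.IsHermitian) :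
    ∃ (U : Mat) (w : Fin d → ℝ), U * Uᵀ = 1 ∧ Uᵀ * U = 1 ∧
      S = U * Matrix.diagonal w * Uᵀ ∧ w = hS.eigenvalues := by
  refine ⟨(hS.eigenvectorUnitary : Mat), hS.eigenvalues, ?_, ?_, ?_, rfl⟩
  · have := (Matrix.mem_unitaryGroup_iff).mp hS.eigenvectorUnitary.2
    simpa [Matrix.star_eq_conjTranspose, Matrix.conjTranspose_eq_transpose_of_trivial] using this
  · have := (Matrix.mem_unitaryGroup_iff').mp hS.eigenvectorUnitary.2
    simpa [Matrix.star_eq_conjTranspose, Matrix.conjTranspose_eq_transpose_of_trivial] using this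
  · have := hS.spectral_theorem
    simpa [Matrix.star_eq_conjTranspose, Matrix.conjTranspose_eq_transpose_of_trivial,
      RCLike.ofReal_real_eq_id] using this

lemma isSymm_smul (c : ℝ) {S : Mat} (hS : S.IsSymm) : (c • S).IsSymm := by
  rw [Matrix.IsSymm, Matrix.transpose_smul, hS]

lemma posDef_congruence {A : Mat} (hA : A.PosDef) {C : Mat} (hC : IsUnit C) :
    (Cᵀ * A * C).PosDef := by
  have hCd : IsUnit C.det := (Matrix.isUnit_iff_isUnit_det C).mp hC
  refine Matrix.PosDef.of_dotProduct_mulVec_pos ?_ ?_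
  · have hAh : Aᴴ = A := hA.isHermitian
    rw [Matrix.conjTranspose_eq_transpose_of_trivial] at hAh
    rw [Matrix.IsHermitian, Matrix.conjTranspose_eq_transpose_of_trivial,
      Matrix.transpose_mul, Matrix.transpose_mul, Matrix.transpose_transpose, hAh, mul_assoc]
  · intro x hx
    have hCx : C *ᵥ x ≠ 0 := by
      intro h
      apply hx
      have : C⁻¹ *ᵥ (C *ᵥ x) = x := by
        rw [Matrix.mulVec_mulVec, Matrix.nonsing_inv_mul C hCd, Matrix.one_mulVec]
      rw [← this, h, Matrix.mulVec_zero]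
    have key := hA.dotProduct_mulVec_pos hCx
    have e1 : star x ⬝ᵥ ((Cᵀ * A * C) *ᵥ x) = star (C *ᵥ x) ⬝ᵥ (A *ᵥ (C *ᵥ x)) := by
      rw [show (Cᵀ * A * C : Mat) = Cᵀ * (A * C) by rw [mul_assoc]]
      rw [← Matrix.mulVec_mulVec, Matrix.dotProduct_mulVec, Matrix.vecMul_transpose]
      simp only [star_trivial, Matrix.mulVec_mulVec]
    rw [e1]
    exact key

lemma mexp_posDef {S : Mat} (hS : S.IsSymm) : (mexp S).PosDef := by
  have hhalf : ((1/2 : ℝ) • S).IsSymm := isSymm_smul _ hS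
  have hB : (mexp ((1/2 : ℝ) • S))ᵀ = mexp ((1/2 : ℝ) • S) := mexp_isSymm hhalf
  have h1 : mexp ((1/2:ℝ) • S) * mexp ((1/2:ℝ) • S) = mexp S := by
    rw [mexp_smul_mul_mexp_smul]
    norm_num
  have := posDef_congruence Matrix.PosDef.one (C := mexp ((1/2:ℝ) • S))
    (mexp_isUnit _)
  rw [mul_one, hB, h1] at this
  exact this

lemma exists_symm_log {A : Mat} (hA : A.PosDef) : ∃ S : Mat, S.IsSymm ∧ mexp S = A := by
  obtain ⟨U, w, hUo, hUo', hspec, hw⟩ := exists_spectral hA.isHermitian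
  refine ⟨U * Matrix.diagonal (fun i => Real.log (w i)) * Uᵀ, ?_, ?_⟩
  · rw [Matrix.IsSymm, Matrix.transpose_mul, Matrix.transpose_mul, Matrix.transpose_transpose,
      Matrix.diagonal_transpose, mul_assoc]
  · rw [mexp_conj_orth hUo, mexp_diagonal]
    have : (fun i => Real.exp (Real.log (w i))) = w := by
      funext i
      exact Real.exp_log (hw ▸ hA.eigenvalues_pos i)
    rw [this, ← hspec]

lemma mlog_spec {A : Mat} (hA : A.PosDef) : (mlog A).IsSymm ∧ mexp (mlog A) = A := by
  rw [mlog, dif_pos (exists_symm_log hA)]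
  exact (exists_symm_log hA).choose_spec

lemma mlog_isSymm {A : Mat} (hA : A.PosDef) : (mlog A).IsSymm := (mlog_spec hA).1

lemma mexp_mlog {A : Mat} (hA : A.PosDef) : mexp (mlog A) = A := (mlog_spec hA).2

lemma msqrt_isSymm {A : Mat} (hA : A.PosDef) : (msqrt A)ᵀ = msqrt A :=
  mexp_isSymm (isSymm_smul _ (mlog_isSymm hA))

lemma minvsqrt_isSymm {A : Mat} (hA : A.PosDef) : (minvsqrt A)ᵀ = minvsqrt A :=
  mexp_isSymm (isSymm_smul _ (mlog_isSymm hA))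

lemma msqrt_mul_minvsqrt {A : Mat} (hA : A.PosDef) : msqrt A * minvsqrt A = 1 := by
  rw [msqrt, minvsqrt, mexp_smul_mul_mexp_smul]
  norm_num
  exact mexp_zero

lemma minvsqrt_mul_msqrt {A : Mat} (hA : A.PosDef) : minvsqrt A * msqrt A = 1 := by
  rw [msqrt, minvsqrt, mexp_smul_mul_mexp_smul]
  norm_num
  exact mexp_zero

lemma msqrt_mul_msqrt {A : Mat} (hA : A.PosDef) : msqrt A * msqrt A = A := by
  rw [msqrt, mexp_smul_mul_mexp_smul]
  norm_num
  exact mexp_mlog hA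

lemma minvsqrt_mul_minvsqrt {A : Mat} (hA : A.PosDef) :
    minvsqrt A * minvsqrt A = mexp (-(mlog A)) := by
  rw [minvsqrt, mexp_smul_mul_mexp_smul]
  norm_num

lemma minvsqrt_sq_mul_self {A : Mat} (hA : A.PosDef) :
    minvsqrt A * minvsqrt A * A = 1 := by
  rw [minvsqrt_mul_minvsqrt hA]
  nth_rewrite 2 [← mexp_mlog hA]
  exact mexp_neg_mul_mexp _
  
lemma self_mul_minvsqrt_sq {A : Mat} (hA : A.PosDef) :
    A * (minvsqrt A * minvsqrt A) = 1 := by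
  rw [minvsqrt_mul_minvsqrt hA]
  nth_rewrite 1 [← mexp_mlog hA]
  exact mexp_mul_mexp_neg _

lemma msqrt_posDef {A : Mat} (hA : A.PosDef) : (msqrt A).PosDef :=
  mexp_posDef (isSymm_smul _ (mlog_isSymm hA))

lemma minvsqrt_posDef {A : Mat} (hA : A.PosDef) : (minvsqrt A).PosDef :=
  mexp_posDef (isSymm_smul _ (mlog_isSymm hA))

lemma minvsqrt_isUnit {A : Mat} : IsUnit (minvsqrt A) := mexp_isUnit _

lemma msqrt_isUnit {A : Mat} : IsUnit (msqrt A) := mexp_isUnit _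

lemma minvsqrt_conj_posDef {A B : Mat} (hA : A.PosDef) (hB : B.PosDef) :
    (minvsqrt A * B * minvsqrt A).PosDef := by
  have := posDef_congruence hB (C := minvsqrt A) minvsqrt_isUnit
  rwa [minvsqrt_isSymm hA] at this

lemma trace_transpose_mul_self (A : Mat) : (Aᵀ * A).trace = ∑ i, ∑ j, (A j i)^2 := by
  rw [Matrix.trace]
  congr 1
  funext i
  rw [Matrix.diag_apply, Matrix.mul_apply]
  congr 1
  funext j
  rw [Matrix.transpose_apply, sq]

lemma trace_transpose_mul_self_nonneg (A : Mat) : 0 ≤ (Aᵀ * A).trace := by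
  rw [trace_transpose_mul_self]
  positivity

lemma frob_nonneg (A : Mat) : 0 ≤ frob A := Real.sqrt_nonneg _

lemma frob_sq (A : Mat) : frob A ^ 2 = (Aᵀ * A).trace :=
  Real.sq_sqrt (trace_transpose_mul_self_nonneg A)

lemma frob_eq_sqrt_sum (A : Mat) : frob A = Real.sqrt (∑ i, ∑ j, (A i j)^2) := by
  rw [frob, trace_transpose_mul_self, Finset.sum_comm]

attribute [local instance] Matrix.frobeniusNormedAddCommGroup

lemma frob_eq_norm (A : Mat) : frob A = ‖A‖ := by
  rw [frob_eq_sqrt_sum, Matrix.frobenius_norm_def, Real.sqrt_eq_rpow]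
  congr 2
  funext i
  congr 1
  funext j
  rw [Real.norm_eq_abs, show ((2:ℝ)) = ((2:ℕ):ℝ) by norm_num, Real.rpow_natCast, sq_abs]

lemma frob_sum_le {n : ℕ} (f : ℕ → Mat) :
    frob (∑ k ∈ Finset.range n, f k) ≤ ∑ k ∈ Finset.range n, frob (f k) := by
  simp only [frob_eq_norm]
  exact norm_sum_le _ _

lemma frob_orth_left {U : Mat} (hU : U * Uᵀ = 1) (X : Mat) : frob (U * X) = frob X := by
  have hU' : Uᵀ * U = 1 := mul_eq_one_comm.mp hU
  rw [frob, frob, Matrix.transpose_mul]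
  congr 2
  calc Xᵀ * Uᵀ * (U * X) = Xᵀ * (Uᵀ * U) * X := by noncomm_ring
    _ = Xᵀ * X := by rw [hU', mul_one]

lemma frob_orth_right {V : Mat} (hV : V * Vᵀ = 1) (X : Mat) : frob (X * V) = frob X := by
  rw [frob, frob, Matrix.transpose_mul]
  congr 1
  calc (Vᵀ * Xᵀ * (X * V)).trace = (Vᵀ * (Xᵀ * (X * V))).trace := by rw [mul_assoc]
    _ = ((Xᵀ * (X * V)) * Vᵀ).trace := Matrix.trace_mul_comm _ _
    _ = (Xᵀ * X * (V * Vᵀ)).trace := by noncomm_ring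
    _ = (Xᵀ * X).trace := by rw [hV, mul_one]

lemma frob_orth_conj {U V : Mat} (hU : U * Uᵀ = 1) (hV : V * Vᵀ = 1) (X : Mat) :
    frob (U * X * V) = frob X := by
  rw [frob_orth_right hV, frob_orth_left hU]

lemma frob_transpose (A : Mat) : frob Aᵀ = frob A := by
  rw [frob_eq_sqrt_sum, frob_eq_sqrt_sum, Finset.sum_comm]
  congr 1

lemma orth_conj_pow {U M : Mat} (hU : U * Uᵀ = 1) (n : ℕ) :
    (U * M * Uᵀ) ^ n = U * M ^ n * Uᵀ := by
  have hU' : Uᵀ * U = 1 := mul_eq_one_comm.mp hU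
  induction n with
  | zero => simp only [pow_zero, mul_one, hU]
  | succ n ih =>
      rw [pow_succ, ih, pow_succ]
      calc U * M ^ n * Uᵀ * (U * M * Uᵀ) = U * M ^ n * (Uᵀ * U) * M * Uᵀ := by noncomm_ring
        _ = U * (M ^ n * M) * Uᵀ := by rw [hU']; noncomm_ring

lemma aeval_conj (p : Polynomial ℝ) {U : Mat} (hU : U * Uᵀ = 1) (M : Mat) :
    Polynomial.aeval (U * M * Uᵀ) p = U * Polynomial.aeval M p * Uᵀ := by
  rw [Polynomial.aeval_eq_sum_range (p := p), Polynomial.aeval_eq_sum_range (p := p)]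
  rw [Finset.mul_sum, Finset.sum_mul]
  apply Finset.sum_congr rfl
  intro k _
  rw [orth_conj_pow hU, Matrix.mul_smul, Matrix.smul_mul]

lemma aeval_diagonal (p : Polynomial ℝ) (v : Fin d → ℝ) :
    Polynomial.aeval (Matrix.diagonal v : Mat) p
      = Matrix.diagonal (fun i => Polynomial.eval (v i) p) := by
  rw [Polynomial.aeval_eq_sum_range (p := p)]
  apply Matrix.ext
  intro i j
  rw [Matrix.sum_apply]
  have hterm : ∀ k, (p.coeff k • (Matrix.diagonal v : Mat) ^ k) i j
      = Matrix.diagonal (fun i => p.coeff k * v i ^ k) i j := by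
    intro k
    rw [Matrix.diagonal_pow, Matrix.smul_apply]
    by_cases h : i = j
    · subst h; simp [Matrix.diagonal_apply_eq]
    · simp [Matrix.diagonal_apply_ne _ h]
  rw [Finset.sum_congr rfl (fun k _ => hterm k)]
  by_cases h : i = j
  · subst h
    simp only [Matrix.diagonal_apply_eq]
    rw [Polynomial.eval_eq_sum_range]
  · simp only [Matrix.diagonal_apply_ne _ h]
    exact Finset.sum_eq_zero fun k _ => rfl

theorem mexp_inj_symm {S T : Mat} (hS : S.IsSymm) (hT : T.IsSymm) (h : mexp S = mexp T) :
    S = T := by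
  obtain ⟨U, a, hU, hU', hSspec, _⟩ := exists_spectral (isHermitian_of_isSymm hS)
  obtain ⟨V, b, hV, hV', hTspec, _⟩ := exists_spectral (isHermitian_of_isSymm hT)
  classical
  set s : Finset ℝ := (Finset.image a Finset.univ) ∪ (Finset.image b Finset.univ) with hs
  set p := Lagrange.interpolate (s.image Real.exp) id Real.log with hpdef
  have hp : ∀ x ∈ s, Polynomial.eval (Real.exp x) p = x := by
    intro x hx
    have hmem : Real.exp x ∈ s.image Real.exp := Finset.mem_image_of_mem _ hx
    have h2 := Lagrange.eval_interpolate_at_node (v := id) (r := Real.log)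
      (Set.injOn_id _) hmem
    rw [← hpdef] at h2
    simpa only [id_eq, Real.log_exp] using h2
  have key : ∀ (W : Mat) (w : Fin d → ℝ), W * Wᵀ = 1 → (∀ i, w i ∈ s) →
      Polynomial.aeval (mexp (W * Matrix.diagonal w * Wᵀ)) p = W * Matrix.diagonal w * Wᵀ := by
    intro W w hW hw
    rw [mexp_conj_orth hW, mexp_diagonal, aeval_conj p hW, aeval_diagonal]
    have heq : (fun i => Polynomial.eval (Real.exp (w i)) p) = w := by
      funext i
      exact hp (w i) (hw i)
    rw [heq]
  have ha : ∀ i, a i ∈ s := fun i => Finset.mem_union_left _ (Finset.mem_image_of_mem _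
    (Finset.mem_univ i))
  have hb : ∀ i, b i ∈ s := fun i => Finset.mem_union_right _ (Finset.mem_image_of_mem _
    (Finset.mem_univ i))
  have e1 := key U a hU ha
  have e2 := key V b hV hb
  rw [← hSspec] at e1
  rw [← hTspec] at e2
  calc S = Polynomial.aeval (mexp S) p := e1.symm
    _ = Polynomial.aeval (mexp T) p := by rw [h]
    _ = T := e2

lemma mlog_mexp {S : Mat} (hS : S.IsSymm) : mlog (mexp S) = S :=
  mexp_inj_symm (mlog_isSymm (mexp_posDef hS)) hS (mexp_mlog (mexp_posDef hS))

lemma mlog_conj_orth {X : Mat} (hX : X.PosDef) {U : Mat} (hU : U * Uᵀ = 1) :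
    mlog (U * X * Uᵀ) = U * mlog X * Uᵀ := by
  have hU' : Uᵀ * U = 1 := mul_eq_one_comm.mp hU
  have hXc : (U * X * Uᵀ).PosDef := by
    have := posDef_congruence hX (C := Uᵀ) ⟨⟨Uᵀ, U, hU', hU⟩, rfl⟩
    rwa [Matrix.transpose_transpose] at this
  have hsymm : (U * mlog X * Uᵀ).IsSymm := by
    rw [Matrix.IsSymm, Matrix.transpose_mul, Matrix.transpose_mul, Matrix.transpose_transpose,
      (mlog_isSymm hX).eq, mul_assoc]
  apply mexp_inj_symm (mlog_isSymm hXc) hsymm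
  rw [mexp_mlog hXc, mexp_conj_orth hU, mexp_mlog hX]

lemma sq_le_of_abs_le {x y : ℝ} (h : |x| ≤ |y|) : x^2 ≤ y^2 := by
  nlinarith [abs_nonneg x, sq_abs x, sq_abs y, abs_nonneg y]

lemma my_abs_le_of_sq_le_sq {x y : ℝ} (h : x^2 ≤ y^2) (hy : 0 ≤ y) : |x| ≤ y := by
  nlinarith [abs_nonneg x, sq_abs x]

lemma smul_conj_diag (r : ℝ) (U : Mat) (v : Fin d → ℝ) :
    r • (U * Matrix.diagonal v * Uᵀ) = U * Matrix.diagonal (fun i => r * v i) * Uᵀ := by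
  rw [← Matrix.smul_mul, ← Matrix.mul_smul]
  congr 2
  rw [← Matrix.diagonal_smul]
  congr 1

lemma minvsqrt_spec {P : Mat} (hP : P.PosDef) {U : Mat} {a : Fin d → ℝ}
    (hU : U * Uᵀ = 1) (hUspec : mlog P = U * Matrix.diagonal a * Uᵀ) :
    minvsqrt P = U * Matrix.diagonal (fun i => Real.exp (-(a i / 2))) * Uᵀ := by
  rw [minvsqrt, hUspec, smul_conj_diag, mexp_conj_orth hU, mexp_diagonal]
  have heq : (fun i => Real.exp (-(1/2 : ℝ) * a i)) = fun i => Real.exp (-(a i / 2)) := by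
    funext i; congr 1; ring
  rw [heq]

lemma log_diff_le_DK {P Q : Mat} (hP : P.PosDef) (hQ : Q.PosDef) :
    frob (mlog P - mlog Q) ≤ frob (minvsqrt P * (P - Q) * minvsqrt Q) := by
  obtain ⟨U, a, hU, hU', hUspec, _⟩ := exists_spectral (isHermitian_of_isSymm (mlog_isSymm hP))
  obtain ⟨V, b, hV, hV', hVspec, _⟩ := exists_spectral (isHermitian_of_isSymm (mlog_isSymm hQ))
  have hPspec : P = U * Matrix.diagonal (fun i => Real.exp (a i)) * Uᵀ := by
    conv_lhs => rw [← mexp_mlog hP, hUspec]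
    rw [mexp_conj_orth hU, mexp_diagonal]
  have hQspec : Q = V * Matrix.diagonal (fun i => Real.exp (b i)) * Vᵀ := by
    conv_lhs => rw [← mexp_mlog hQ, hVspec]
    rw [mexp_conj_orth hV, mexp_diagonal]
  have hPinv := minvsqrt_spec hP hU hUspec
  have hQinv := minvsqrt_spec hQ hV hVspec
  set W : Mat := Uᵀ * V with hW
  have hconjL : frob (mlog P - mlog Q) = frob (Uᵀ * (mlog P - mlog Q) * V) := by
    rw [frob_orth_conj (U := Uᵀ) (by rw [Matrix.transpose_transpose]; exact hU') hV]
  have hconjR : frob (minvsqrt P * (P - Q) * minvsqrt Q)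
      = frob (Uᵀ * (minvsqrt P * (P - Q) * minvsqrt Q) * V) := by
    rw [frob_orth_conj (U := Uᵀ) (by rw [Matrix.transpose_transpose]; exact hU') hV]
  have E1 : Uᵀ * (mlog P - mlog Q) * V
      = Matrix.diagonal a * W - W * Matrix.diagonal b := by
    rw [hUspec, hVspec, hW]
    calc Uᵀ * (U * Matrix.diagonal a * Uᵀ - V * Matrix.diagonal b * Vᵀ) * V
        = (Uᵀ * U) * Matrix.diagonal a * (Uᵀ * V) - (Uᵀ * V) * Matrix.diagonal b * (Vᵀ * V) := by
          noncomm_ring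
      _ = Matrix.diagonal a * (Uᵀ * V) - (Uᵀ * V) * Matrix.diagonal b := by
          rw [hU', hV', one_mul, mul_one]
  have E0 : Uᵀ * (P - Q) * V
      = Matrix.diagonal (fun i => Real.exp (a i)) * W - W * Matrix.diagonal (fun i => Real.exp (b i)) := by
    rw [hPspec, hQspec, hW]
    calc Uᵀ * (U * Matrix.diagonal (fun i => Real.exp (a i)) * Uᵀ
          - V * Matrix.diagonal (fun i => Real.exp (b i)) * Vᵀ) * V
        = (Uᵀ * U) * Matrix.diagonal (fun i => Real.exp (a i)) * (Uᵀ * V)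
          - (Uᵀ * V) * Matrix.diagonal (fun i => Real.exp (b i)) * (Vᵀ * V) := by noncomm_ring
      _ = _ := by rw [hU', hV', one_mul, mul_one]
  have E2 : Uᵀ * (minvsqrt P * (P - Q) * minvsqrt Q) * V
      = Matrix.diagonal (fun i => Real.exp (-(a i / 2))) * (Uᵀ * (P - Q) * V)
          * Matrix.diagonal (fun i => Real.exp (-(b i / 2))) := by
    rw [hPinv, hQinv]
    calc Uᵀ * (U * Matrix.diagonal (fun i => Real.exp (-(a i / 2))) * Uᵀ * (P - Q)
            * (V * Matrix.diagonal (fun i => Real.exp (-(b i / 2))) * Vᵀ)) * V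
        = (Uᵀ * U) * Matrix.diagonal (fun i => Real.exp (-(a i / 2))) * (Uᵀ * (P - Q) * V)
            * Matrix.diagonal (fun i => Real.exp (-(b i / 2))) * (Vᵀ * V) := by noncomm_ring
      _ = _ := by rw [hU', hV', one_mul, mul_one]
  rw [hconjL, hconjR, E1, E2, E0, frob_eq_sqrt_sum, frob_eq_sqrt_sum]
  apply Real.sqrt_le_sqrt
  apply Finset.sum_le_sum
  intro i _
  apply Finset.sum_le_sum
  intro j _
  have eL : (Matrix.diagonal a * W - W * Matrix.diagonal b) i j = (a i - b j) * W i j := by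
    rw [Matrix.sub_apply, Matrix.diagonal_mul, Matrix.mul_diagonal]
    ring
  have eR : (Matrix.diagonal (fun i => Real.exp (-(a i / 2)))
        * (Matrix.diagonal (fun i => Real.exp (a i)) * W - W * Matrix.diagonal (fun i => Real.exp (b i)))
        * Matrix.diagonal (fun i => Real.exp (-(b i / 2))) : Mat) i j
      = (2 * Real.sinh ((a i - b j) / 2)) * W i j := by
    rw [Matrix.mul_diagonal, Matrix.diagonal_mul, Matrix.sub_apply, Matrix.diagonal_mul,
      Matrix.mul_diagonal]
    calc Real.exp (-(a i / 2)) * (Real.exp (a i) * W i j - W i j * Real.exp (b j))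
          * Real.exp (-(b j / 2))
        = (Real.exp (-(a i / 2)) * (Real.exp (a i) - Real.exp (b j)) * Real.exp (-(b j / 2)))
            * W i j := by ring
      _ = (2 * Real.sinh ((a i - b j) / 2)) * W i j := by rw [exp_half_diff]
  rw [eL, eR, mul_pow, mul_pow]
  exact mul_le_mul_of_nonneg_right
    (sq_le_of_abs_le (abs_le_abs_two_sinh_half (a i - b j)))
    (sq_nonneg _)

lemma trace_conj {U : Mat} (hU' : Uᵀ * U = 1) (M : Mat) : (U * M * Uᵀ).trace = M.trace := by
  calc (U * M * Uᵀ).trace = (Uᵀ * (U * M)).trace := Matrix.trace_mul_comm (U * M) Uᵀ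
    _ = ((Uᵀ * U) * M).trace := by rw [mul_assoc]
    _ = M.trace := by rw [hU', one_mul]

lemma mconj_mul {U : Mat} (hU' : Uᵀ * U = 1) (M N : Mat) :
    (U * M * Uᵀ) * (U * N * Uᵀ) = U * (M * N) * Uᵀ := by
  calc (U * M * Uᵀ) * (U * N * Uᵀ) = U * M * (Uᵀ * U) * N * Uᵀ := by noncomm_ring
    _ = U * (M * N) * Uᵀ := by rw [hU']; noncomm_ring

lemma mexp_smul_spec {L : Mat} {U : Mat} {w : Fin d → ℝ} (hU : U * Uᵀ = 1)
    (hLspec : L = U * Matrix.diagonal w * Uᵀ) (r : ℝ) :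
    mexp (r • L) = U * Matrix.diagonal (fun i => Real.exp (r * w i)) * Uᵀ := by
  rw [hLspec, smul_conj_diag, mexp_conj_orth hU, mexp_diagonal]

lemma piece_frob_sq {P : Mat} (hP : P.PosDef) {L : Mat} (hL : L.IsSymm)
    {U : Mat} {w : Fin d → ℝ} (hU : U * Uᵀ = 1) (hU' : Uᵀ * U = 1)
    (hLspec : L = U * Matrix.diagonal w * Uᵀ) (s t : ℝ) :
    frob (minvsqrt (msqrt P * mexp (s • L) * msqrt P)
        * ((msqrt P * mexp (s • L) * msqrt P) - (msqrt P * mexp (t • L) * msqrt P))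
        * minvsqrt (msqrt P * mexp (t • L) * msqrt P)) ^ 2
      = ∑ i, (2 * Real.sinh ((s - t) * w i / 2))^2 := by
  have hEsymm : ∀ r : ℝ, (mexp (r • L))ᵀ = mexp (r • L) := fun r => mexp_isSymm (isSymm_smul r hL)
  have hγpd : ∀ r : ℝ, (msqrt P * mexp (r • L) * msqrt P).PosDef := by
    intro r
    have := posDef_congruence (mexp_posDef (isSymm_smul r hL)) (C := msqrt P) msqrt_isUnit
    rwa [msqrt_isSymm hP] at this
  have hγsymm : ∀ r : ℝ, (msqrt P * mexp (r • L) * msqrt P)ᵀ = msqrt P * mexp (r • L) * msqrt P := by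
    intro r
    rw [Matrix.transpose_mul, Matrix.transpose_mul, msqrt_isSymm hP, hEsymm, mul_assoc]
  have hEE : ∀ r : ℝ, mexp (r • L) * mexp ((-r) • L) = 1 := by
    intro r
    rw [mexp_smul_mul_mexp_smul]
    simp [mexp_zero]
  have hJ : ∀ r : ℝ, (msqrt P * mexp (r • L) * msqrt P)
      * (minvsqrt P * mexp ((-r) • L) * minvsqrt P) = 1 := by
    intro r
    calc (msqrt P * mexp (r • L) * msqrt P) * (minvsqrt P * mexp ((-r) • L) * minvsqrt P)
        = msqrt P * mexp (r • L) * (msqrt P * minvsqrt P) * mexp ((-r) • L) * minvsqrt P := by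
          noncomm_ring
      _ = msqrt P * (mexp (r • L) * mexp ((-r) • L)) * minvsqrt P := by
          rw [msqrt_mul_minvsqrt hP]; noncomm_ring
      _ = 1 := by rw [hEE, mul_one, msqrt_mul_minvsqrt hP]
  have hinv2 : ∀ r : ℝ, minvsqrt (msqrt P * mexp (r • L) * msqrt P)
      * minvsqrt (msqrt P * mexp (r • L) * msqrt P)
      = minvsqrt P * mexp ((-r) • L) * minvsqrt P := by
    intro r
    have h1 := minvsqrt_sq_mul_self (hγpd r)
    calc minvsqrt (msqrt P * mexp (r • L) * msqrt P) * minvsqrt (msqrt P * mexp (r • L) * msqrt P)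
        = minvsqrt (msqrt P * mexp (r • L) * msqrt P) * minvsqrt (msqrt P * mexp (r • L) * msqrt P)
          * ((msqrt P * mexp (r • L) * msqrt P) * (minvsqrt P * mexp ((-r) • L) * minvsqrt P)) := by
          rw [hJ, mul_one]
      _ = (minvsqrt (msqrt P * mexp (r • L) * msqrt P) * minvsqrt (msqrt P * mexp (r • L) * msqrt P)
          * (msqrt P * mexp (r • L) * msqrt P)) * (minvsqrt P * mexp ((-r) • L) * minvsqrt P) := by
          noncomm_ring
      _ = minvsqrt P * mexp ((-r) • L) * minvsqrt P := by rw [h1, one_mul]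
  have hRT : (minvsqrt (msqrt P * mexp (s • L) * msqrt P)
        * ((msqrt P * mexp (s • L) * msqrt P) - (msqrt P * mexp (t • L) * msqrt P))
        * minvsqrt (msqrt P * mexp (t • L) * msqrt P))ᵀ
      = minvsqrt (msqrt P * mexp (t • L) * msqrt P)
        * ((msqrt P * mexp (s • L) * msqrt P) - (msqrt P * mexp (t • L) * msqrt P))
        * minvsqrt (msqrt P * mexp (s • L) * msqrt P) := by
    rw [Matrix.transpose_mul, Matrix.transpose_mul, Matrix.transpose_sub,
      minvsqrt_isSymm (hγpd s), minvsqrt_isSymm (hγpd t), hγsymm s, hγsymm t, ← mul_assoc]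
  have htr : frob (minvsqrt (msqrt P * mexp (s • L) * msqrt P)
        * ((msqrt P * mexp (s • L) * msqrt P) - (msqrt P * mexp (t • L) * msqrt P))
        * minvsqrt (msqrt P * mexp (t • L) * msqrt P)) ^ 2
      = (((msqrt P * mexp (s • L) * msqrt P) - (msqrt P * mexp (t • L) * msqrt P))
          * (minvsqrt P * mexp ((-s) • L) * minvsqrt P)
        * ((((msqrt P * mexp (s • L) * msqrt P) - (msqrt P * mexp (t • L) * msqrt P))
          * (minvsqrt P * mexp ((-t) • L) * minvsqrt P)))).trace := by
    rw [frob_sq, hRT]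
    calc (minvsqrt (msqrt P * mexp (t • L) * msqrt P)
          * ((msqrt P * mexp (s • L) * msqrt P) - (msqrt P * mexp (t • L) * msqrt P))
          * minvsqrt (msqrt P * mexp (s • L) * msqrt P)
          * (minvsqrt (msqrt P * mexp (s • L) * msqrt P)
            * ((msqrt P * mexp (s • L) * msqrt P) - (msqrt P * mexp (t • L) * msqrt P))
            * minvsqrt (msqrt P * mexp (t • L) * msqrt P))).trace
        = (minvsqrt (msqrt P * mexp (t • L) * msqrt P)
            * (((msqrt P * mexp (s • L) * msqrt P) - (msqrt P * mexp (t • L) * msqrt P))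
              * (minvsqrt (msqrt P * mexp (s • L) * msqrt P)
                 * minvsqrt (msqrt P * mexp (s • L) * msqrt P))
              * ((msqrt P * mexp (s • L) * msqrt P) - (msqrt P * mexp (t • L) * msqrt P))
              * minvsqrt (msqrt P * mexp (t • L) * msqrt P))).trace := by
          noncomm_ring
      _ = ((((msqrt P * mexp (s • L) * msqrt P) - (msqrt P * mexp (t • L) * msqrt P))
              * (minvsqrt (msqrt P * mexp (s • L) * msqrt P)
                 * minvsqrt (msqrt P * mexp (s • L) * msqrt P))
              * ((msqrt P * mexp (s • L) * msqrt P) - (msqrt P * mexp (t • L) * msqrt P))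
              * minvsqrt (msqrt P * mexp (t • L) * msqrt P))
            * minvsqrt (msqrt P * mexp (t • L) * msqrt P)).trace := Matrix.trace_mul_comm _ _
      _ = ((((msqrt P * mexp (s • L) * msqrt P) - (msqrt P * mexp (t • L) * msqrt P))
              * (minvsqrt (msqrt P * mexp (s • L) * msqrt P)
                 * minvsqrt (msqrt P * mexp (s • L) * msqrt P))
              * (((msqrt P * mexp (s • L) * msqrt P) - (msqrt P * mexp (t • L) * msqrt P))
              * (minvsqrt (msqrt P * mexp (t • L) * msqrt P)
                 * minvsqrt (msqrt P * mexp (t • L) * msqrt P))))).trace := by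
          rw [show ∀ X Y Z W V : Mat, X * Y * Z * W * V = X * Y * (Z * (W * V)) from
            fun X Y Z W V => by noncomm_ring]
      _ = _ := by rw [hinv2 s, hinv2 t]
  have hΔ : (msqrt P * mexp (s • L) * msqrt P) - (msqrt P * mexp (t • L) * msqrt P)
      = msqrt P * (mexp (s • L) - mexp (t • L)) * msqrt P := by
    rw [Matrix.mul_sub, Matrix.sub_mul]
  have hmid : ∀ r : ℝ, (msqrt P * (mexp (s • L) - mexp (t • L)) * msqrt P)
        * (minvsqrt P * mexp ((-r) • L) * minvsqrt P)
      = msqrt P * ((mexp (s • L) - mexp (t • L)) * mexp ((-r) • L)) * minvsqrt P := by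
    intro r
    calc msqrt P * (mexp (s • L) - mexp (t • L)) * msqrt P
          * (minvsqrt P * mexp ((-r) • L) * minvsqrt P)
        = msqrt P * (mexp (s • L) - mexp (t • L)) * (msqrt P * minvsqrt P)
            * mexp ((-r) • L) * minvsqrt P := by noncomm_ring
      _ = _ := by rw [msqrt_mul_minvsqrt hP]; noncomm_ring
  have htr2 : frob (minvsqrt (msqrt P * mexp (s • L) * msqrt P)
        * ((msqrt P * mexp (s • L) * msqrt P) - (msqrt P * mexp (t • L) * msqrt P))
        * minvsqrt (msqrt P * mexp (t • L) * msqrt P)) ^ 2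
      = ((mexp (s • L) - mexp (t • L)) * mexp ((-s) • L)
          * ((mexp (s • L) - mexp (t • L)) * mexp ((-t) • L))).trace := by
    rw [htr, hΔ, hmid s, hmid t]
    calc (msqrt P * ((mexp (s • L) - mexp (t • L)) * mexp ((-s) • L)) * minvsqrt P
          * (msqrt P * ((mexp (s • L) - mexp (t • L)) * mexp ((-t) • L)) * minvsqrt P)).trace
        = (msqrt P * ((mexp (s • L) - mexp (t • L)) * mexp ((-s) • L)) * (minvsqrt P * msqrt P)
            * ((mexp (s • L) - mexp (t • L)) * mexp ((-t) • L)) * minvsqrt P).trace := by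
          noncomm_ring
      _ = (msqrt P * ((mexp (s • L) - mexp (t • L)) * mexp ((-s) • L)
            * ((mexp (s • L) - mexp (t • L)) * mexp ((-t) • L))) * minvsqrt P).trace := by
          rw [minvsqrt_mul_msqrt hP]; noncomm_ring
      _ = (((mexp (s • L) - mexp (t • L)) * mexp ((-s) • L)
            * ((mexp (s • L) - mexp (t • L)) * mexp ((-t) • L))) * (minvsqrt P * msqrt P)).trace := by
          rw [mul_assoc, Matrix.trace_mul_comm, mul_assoc]
      _ = _ := by rw [minvsqrt_mul_msqrt hP, mul_one]
  rw [htr2]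
  rw [mexp_smul_spec hU hLspec s, mexp_smul_spec hU hLspec t,
    mexp_smul_spec hU hLspec (-s), mexp_smul_spec hU hLspec (-t)]
  rw [show (U * Matrix.diagonal (fun i => Real.exp (s * w i)) * Uᵀ
      - U * Matrix.diagonal (fun i => Real.exp (t * w i)) * Uᵀ)
      = U * (Matrix.diagonal (fun i => Real.exp (s * w i))
        - Matrix.diagonal (fun i => Real.exp (t * w i))) * Uᵀ by
    rw [Matrix.mul_sub, Matrix.sub_mul]]
  rw [Matrix.diagonal_sub, mconj_mul hU', mconj_mul hU', mconj_mul hU', trace_conj hU',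
    Matrix.diagonal_mul_diagonal, Matrix.diagonal_mul_diagonal, Matrix.diagonal_mul_diagonal,
    Matrix.trace_diagonal]
  apply Finset.sum_congr rfl
  intro i _
  have h1 := exp_diff_sq (s * w i) (t * w i)
  have e1 : Real.exp ((-s) * w i) = Real.exp (-(s * w i)) := by congr 1; ring
  have e2 : Real.exp ((-t) * w i) = Real.exp (-(t * w i)) := by congr 1; ring
  have e3 : (s * w i - t * w i) / 2 = (s - t) * w i / 2 := by ring
  rw [show -s * w i = (-s) * w i from rfl, show -t * w i = (-t) * w i from rfl, e1, e2]
  rw [e3] at h1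
  nlinarith [h1]

lemma conj_mexp_posDef {P L : Mat} (hP : P.PosDef) (hL : L.IsSymm) (r : ℝ) :
    (msqrt P * mexp (r • L) * msqrt P).PosDef := by
  have := posDef_congruence (mexp_posDef (isSymm_smul r hL)) (C := msqrt P) msqrt_isUnit
  rwa [msqrt_isSymm hP] at this

theorem frob_mlog_sub_le {P Q : Mat} (hP : P.PosDef) (hQ : Q.PosDef) :
    frob (mlog P - mlog Q) ≤ frob (mlog (minvsqrt P * Q * minvsqrt P)) := by
  have hCpd : (minvsqrt P * Q * minvsqrt P).PosDef := minvsqrt_conj_posDef hP hQ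
  have hLsymm : (mlog (minvsqrt P * Q * minvsqrt P)).IsSymm := mlog_isSymm hCpd
  obtain ⟨U, w, hU, hU', hLspec, _⟩ := exists_spectral (isHermitian_of_isSymm hLsymm)
  set δ := frob (mlog (minvsqrt P * Q * minvsqrt P)) with hδ
  have hδ0 : (0:ℝ) ≤ δ := frob_nonneg _
  have hδsq : δ ^ 2 = ∑ i, (w i)^2 := by
    rw [hδ, frob_sq, hLsymm.eq, hLspec, mconj_mul hU', trace_conj hU',
      Matrix.diagonal_mul_diagonal, Matrix.trace_diagonal]
    apply Finset.sum_congr rfl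
    intro i _
    exact (sq (w i)).symm
  have hwle : ∀ i, |w i| ≤ δ := by
    intro i
    apply my_abs_le_of_sq_le_sq _ hδ0
    rw [hδsq]
    exact Finset.single_le_sum (fun j _ => sq_nonneg (w j)) (Finset.mem_univ i)
  have main : ∀ n : ℕ, 0 < n → frob (mlog P - mlog Q) ≤ δ * Real.cosh (δ / (2 * n)) := by
    intro n hn
    have hn' : (0:ℝ) < (n:ℝ) := by exact_mod_cast hn
    set L := mlog (minvsqrt P * Q * minvsqrt P) with hLdef
    set f : ℕ → Mat := fun k => mlog (msqrt P * mexp (((k:ℝ)/(n:ℝ)) • L) * msqrt P) with hf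
    have hf0 : f 0 = mlog P := by
      rw [hf]
      simp only [Nat.cast_zero, zero_div, zero_smul, mexp_zero, mul_one]
      rw [msqrt_mul_msqrt hP]
    have hfn : f n = mlog Q := by
      rw [hf]
      simp only [div_self (ne_of_gt hn'), one_smul]
      rw [hLdef, mexp_mlog hCpd]
      have hQeq : msqrt P * (minvsqrt P * Q * minvsqrt P) * msqrt P = Q := by
        calc msqrt P * (minvsqrt P * Q * minvsqrt P) * msqrt P
            = (msqrt P * minvsqrt P) * Q * (minvsqrt P * msqrt P) := by noncomm_ring
          _ = Q := by rw [msqrt_mul_minvsqrt hP, minvsqrt_mul_msqrt hP, one_mul, mul_one]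
      rw [hQeq]
    have htel : mlog P - mlog Q = ∑ k ∈ Finset.range n, (f k - f (k+1)) := by
      rw [Finset.sum_range_sub' f n, hf0, hfn]
    have hpiece : ∀ k : ℕ, frob (f k - f (k+1)) ≤ (δ/(n:ℝ)) * Real.cosh (δ / (2 * n)) := by
      intro k
      have hpd1 := conj_mexp_posDef hP hLsymm ((k:ℝ)/(n:ℝ))
      have hpd2 := conj_mexp_posDef hP hLsymm (((k:ℝ)+1)/(n:ℝ))
      have hcast : ((k+1 : ℕ) : ℝ) = (k:ℝ)+1 := by push_cast; ring
      have step1 : frob (f k - f (k+1)) ≤ frob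
          (minvsqrt (msqrt P * mexp (((k:ℝ)/(n:ℝ)) • L) * msqrt P)
            * ((msqrt P * mexp (((k:ℝ)/(n:ℝ)) • L) * msqrt P)
              - (msqrt P * mexp ((((k:ℝ)+1)/(n:ℝ)) • L) * msqrt P))
            * minvsqrt (msqrt P * mexp ((((k:ℝ)+1)/(n:ℝ)) • L) * msqrt P)) := by
        rw [hf]
        simp only [hcast]
        exact log_diff_le_DK hpd1 hpd2
      have step2 := piece_frob_sq hP hLsymm hU hU' hLspec ((k:ℝ)/(n:ℝ)) (((k:ℝ)+1)/(n:ℝ))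
      have hB0 : (0:ℝ) ≤ (δ/(n:ℝ)) * Real.cosh (δ / (2 * n)) := by
        apply mul_nonneg (by positivity) (le_of_lt (Real.cosh_pos _))
      have step3 : frob
          (minvsqrt (msqrt P * mexp (((k:ℝ)/(n:ℝ)) • L) * msqrt P)
            * ((msqrt P * mexp (((k:ℝ)/(n:ℝ)) • L) * msqrt P)
              - (msqrt P * mexp ((((k:ℝ)+1)/(n:ℝ)) • L) * msqrt P))
            * minvsqrt (msqrt P * mexp ((((k:ℝ)+1)/(n:ℝ)) • L) * msqrt P))
          ≤ (δ/(n:ℝ)) * Real.cosh (δ / (2 * n)) := by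
        have hsq : frob (minvsqrt (msqrt P * mexp (((k:ℝ)/(n:ℝ)) • L) * msqrt P)
            * ((msqrt P * mexp (((k:ℝ)/(n:ℝ)) • L) * msqrt P)
              - (msqrt P * mexp ((((k:ℝ)+1)/(n:ℝ)) • L) * msqrt P))
            * minvsqrt (msqrt P * mexp ((((k:ℝ)+1)/(n:ℝ)) • L) * msqrt P)) ^ 2
            ≤ ((δ/(n:ℝ)) * Real.cosh (δ / (2 * n))) ^ 2 := by
          rw [step2]
          have hterm : ∀ i, (2 * Real.sinh (((k:ℝ)/(n:ℝ) - ((k:ℝ)+1)/(n:ℝ)) * w i / 2))^2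
              ≤ (w i / (n:ℝ))^2 * Real.cosh (δ / (2 * n))^2 := by
            intro i
            set x := ((k:ℝ)/(n:ℝ) - ((k:ℝ)+1)/(n:ℝ)) * w i with hx
            have hxval : x = -(w i)/(n:ℝ) := by rw [hx]; field_simp; ring
            have hxabs : |x| ≤ δ/(n:ℝ) := by
              rw [hxval, abs_div, abs_neg, abs_of_pos hn']
              exact div_le_div_of_nonneg_right (hwle i) hn'.le
            have habs := abs_two_sinh_half_le hxabs
            have hc : (δ/(n:ℝ))/2 = δ/(2*(n:ℝ)) := by ring
            rw [hc] at habs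
            have hx2 : x^2 = (w i/(n:ℝ))^2 := by rw [hxval]; ring
            nlinarith [habs, abs_nonneg x, sq_abs x, sq_abs (2*Real.sinh (x/2)),
              Real.cosh_pos (δ/(2*(n:ℝ))), abs_nonneg (2*Real.sinh (x/2))]
          have hsum2 : ∑ i, (w i / (n:ℝ))^2 * Real.cosh (δ/(2*(n:ℝ)))^2
              = (δ/(n:ℝ) * Real.cosh (δ/(2*(n:ℝ))))^2 := by
            rw [← Finset.sum_mul]
            have hss : ∑ i, (w i / (n:ℝ))^2 = (δ/(n:ℝ))^2 := by
              calc ∑ i, (w i / (n:ℝ))^2 = ∑ i, (w i)^2 / (n:ℝ)^2 :=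
                    Finset.sum_congr rfl (fun i _ => by rw [div_pow])
                _ = (∑ i, (w i)^2) / (n:ℝ)^2 := by rw [Finset.sum_div]
                _ = δ^2/(n:ℝ)^2 := by rw [hδsq]
                _ = (δ/(n:ℝ))^2 := by rw [div_pow]
            rw [hss]
            ring
          calc ∑ i, (2 * Real.sinh (((k:ℝ)/(n:ℝ) - ((k:ℝ)+1)/(n:ℝ)) * w i / 2))^2
              ≤ ∑ i, (w i / (n:ℝ))^2 * Real.cosh (δ/(2*(n:ℝ)))^2 :=
                Finset.sum_le_sum (fun i _ => hterm i)
            _ = (δ/(n:ℝ) * Real.cosh (δ/(2*(n:ℝ))))^2 := hsum2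
        calc frob _ ≤ |frob _| := le_abs_self _
          _ ≤ _ := my_abs_le_of_sq_le_sq hsq hB0
      exact le_trans step1 step3
    calc frob (mlog P - mlog Q) = frob (∑ k ∈ Finset.range n, (f k - f (k+1))) := by rw [htel]
      _ ≤ ∑ k ∈ Finset.range n, frob (f k - f (k+1)) := frob_sum_le _
      _ ≤ ∑ _k ∈ Finset.range n, (δ/(n:ℝ)) * Real.cosh (δ / (2 * n)) :=
          Finset.sum_le_sum (fun k _ => hpiece k)
      _ = n * ((δ/(n:ℝ)) * Real.cosh (δ / (2 * n))) := by
          rw [Finset.sum_const, Finset.card_range]; simp [nsmul_eq_mul]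
      _ = δ * Real.cosh (δ / (2 * n)) := by field_simp
  have hlim : Filter.Tendsto (fun n : ℕ => δ * Real.cosh (δ / (2 * n))) Filter.atTop (nhds δ) := by
    have h1 : Filter.Tendsto (fun n : ℕ => δ / (2 * n)) Filter.atTop (nhds 0) := by
      have : (fun n : ℕ => δ / (2 * n)) = fun n : ℕ => (δ/2) / n := by
        funext n
        rcases eq_or_ne (n:ℝ) 0 with h | h
        · rw [h]; simp
        · field_simp
      rw [this]
      exact tendsto_const_div_atTop_nhds_zero_nat (δ/2)
    have h2 : Filter.Tendsto (fun n : ℕ => Real.cosh (δ / (2 * n))) Filter.atTop (nhds 1) := by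
      have := (Real.continuous_cosh.continuousAt (x := 0)).tendsto.comp h1
      simpa [Real.cosh_zero, Function.comp_def] using this
    have h3 := h2.const_mul δ
    simpa using h3
  apply ge_of_tendsto hlim
  filter_upwards [Filter.eventually_gt_atTop 0] with n hn
  exact main n hn

lemma minvsqrt_conj_self {A : Mat} (hA : A.PosDef) : minvsqrt A * A * minvsqrt A = 1 := by
  have e : minvsqrt A * A = msqrt A := by
    rw [minvsqrt, msqrt]
    nth_rewrite 2 [← mexp_mlog hA]
    rw [show mexp (mlog A) = mexp ((1:ℝ) • mlog A) by rw [one_smul], mexp_smul_mul_mexp_smul]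
    norm_num
  rw [e, msqrt_mul_minvsqrt hA]

lemma frob_mlog_congr {A B M : Mat} (hA : A.PosDef) (hB : B.PosDef)
    (hM : Mᵀ = M) (hMu : IsUnit M) :
    frob (mlog (minvsqrt (M * A * M) * (M * B * M) * minvsqrt (M * A * M)))
      = frob (mlog (minvsqrt A * B * minvsqrt A)) := by
  have hP : (M * A * M).PosDef := by
    have := posDef_congruence hA hMu
    rwa [hM] at this
  have hQ : (M * B * M).PosDef := by
    have := posDef_congruence hB hMu
    rwa [hM] at this
  have hX : (minvsqrt A * B * minvsqrt A).PosDef := minvsqrt_conj_posDef hA hB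
  have hOT : (minvsqrt (M * A * M) * M * msqrt A)ᵀ = msqrt A * M * minvsqrt (M * A * M) := by
    rw [Matrix.transpose_mul, Matrix.transpose_mul, msqrt_isSymm hA, hM,
      minvsqrt_isSymm hP, ← mul_assoc]
  have hO : (minvsqrt (M * A * M) * M * msqrt A)
      * (minvsqrt (M * A * M) * M * msqrt A)ᵀ = 1 := by
    rw [hOT]
    calc minvsqrt (M * A * M) * M * msqrt A * (msqrt A * M * minvsqrt (M * A * M))
        = minvsqrt (M * A * M) * (M * (msqrt A * msqrt A) * M) * minvsqrt (M * A * M) := by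
          noncomm_ring
      _ = minvsqrt (M * A * M) * (M * A * M) * minvsqrt (M * A * M) := by
          rw [msqrt_mul_msqrt hA]
      _ = 1 := minvsqrt_conj_self hP
  have hconj : minvsqrt (M * A * M) * (M * B * M) * minvsqrt (M * A * M)
      = (minvsqrt (M * A * M) * M * msqrt A) * (minvsqrt A * B * minvsqrt A)
        * (minvsqrt (M * A * M) * M * msqrt A)ᵀ := by
    rw [hOT]
    calc minvsqrt (M * A * M) * (M * B * M) * minvsqrt (M * A * M)
        = minvsqrt (M * A * M) * M * 1 * B * 1 * M * minvsqrt (M * A * M) := by noncomm_ring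
      _ = minvsqrt (M * A * M) * M * (msqrt A * minvsqrt A) * B * (minvsqrt A * msqrt A) * M
          * minvsqrt (M * A * M) := by rw [msqrt_mul_minvsqrt hA, minvsqrt_mul_msqrt hA]
      _ = minvsqrt (M * A * M) * M * msqrt A * (minvsqrt A * B * minvsqrt A)
          * (msqrt A * M * minvsqrt (M * A * M)) := by noncomm_ring
  rw [hconj, mlog_conj_orth hX hO, frob_orth_conj hO
    (by rw [Matrix.transpose_transpose]; exact mul_eq_one_comm.mp hO)]

theorem stmt3' (A B G : Mat) (hA : A.PosDef) (hB : B.PosDef) (hG : G.PosDef) :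
    normG G (logMap G A - logMap G B) ≤ airm A B := by
  have hPpd : (minvsqrt G * A * minvsqrt G).PosDef := minvsqrt_conj_posDef hG hA
  have hQpd : (minvsqrt G * B * minvsqrt G).PosDef := minvsqrt_conj_posDef hG hB
  set X : Mat := mlog (minvsqrt G * A * minvsqrt G) - mlog (minvsqrt G * B * minvsqrt G) with hX
  have hXsymm : Xᵀ = X := by
    rw [hX, Matrix.transpose_sub, (mlog_isSymm hPpd).eq, (mlog_isSymm hQpd).eq]
  have hdiff : logMap G A - logMap G B = msqrt G * X * msqrt G := by
    rw [logMap, logMap, hX, Matrix.mul_sub, Matrix.sub_mul]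
  have hGinv : G⁻¹ = minvsqrt G * minvsqrt G :=
    Matrix.inv_eq_left_inv (minvsqrt_sq_mul_self hG)
  have htr : innG G (msqrt G * X * msqrt G) (msqrt G * X * msqrt G) = (Xᵀ * X).trace := by
    rw [innG, hGinv]
    have e1 : minvsqrt G * minvsqrt G * (msqrt G * X * msqrt G)
        = minvsqrt G * X * msqrt G := by
      calc minvsqrt G * minvsqrt G * (msqrt G * X * msqrt G)
          = minvsqrt G * (minvsqrt G * msqrt G) * X * msqrt G := by noncomm_ring
        _ = minvsqrt G * X * msqrt G := by rw [minvsqrt_mul_msqrt hG]; noncomm_ring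
    rw [show minvsqrt G * minvsqrt G * (msqrt G * X * msqrt G) * (minvsqrt G * minvsqrt G)
          * (msqrt G * X * msqrt G)
        = (minvsqrt G * minvsqrt G * (msqrt G * X * msqrt G))
          * (minvsqrt G * minvsqrt G * (msqrt G * X * msqrt G)) from by noncomm_ring]
    rw [e1]
    calc (minvsqrt G * X * msqrt G * (minvsqrt G * X * msqrt G)).trace
        = (minvsqrt G * (X * (msqrt G * minvsqrt G) * X) * msqrt G).trace := by noncomm_ring
      _ = (minvsqrt G * (X * X) * msqrt G).trace := by rw [msqrt_mul_minvsqrt hG]; noncomm_ring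
      _ = ((X * X) * (msqrt G * minvsqrt G)).trace := by
          rw [mul_assoc, Matrix.trace_mul_comm, mul_assoc]
      _ = (Xᵀ * X).trace := by rw [msqrt_mul_minvsqrt hG, mul_one, hXsymm]
  have hnorm : normG G (logMap G A - logMap G B) = frob X := by
    rw [hdiff, normG, htr, frob]
  rw [hnorm]
  have hchain := frob_mlog_sub_le hPpd hQpd
  rw [← hX] at hchain
  have hcongr := frob_mlog_congr hA hB (minvsqrt_isSymm hG) minvsqrt_isUnit
  rw [airm, ← hcongr]
  exact hchain

/-- Generalized exponential metric increasing property: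
`δ_r(A,B) ≥ ‖log_G(A) − log_G(B)‖_G`. -/
theorem stmt3 (d : ℕ) (A B G : Matrix (Fin d) (Fin d) ℝ)
    (hA : A.PosDef) (hB : B.PosDef) (hG : G.PosDef) :
    normG G (logMap G A - logMap G B) ≤ airm A B :=
  stmt3' A B G hA hB hG
end

section
/- (Positive semidefiniteness of the LogEuclidean kernel Gram matrix.) For every d × d real symmetric positive definite matrix G and every finite family X_1, …, X_n of d × d real symmetric positive definite matrices, the n × n Gram matrix H with entries H_{ij} = k_G(X_i, X_j) = tr( log(G^{-1/2} X_i G^{-1/2}) · log(G^{-1/2} X_j G^{-1/2}) ) is symmetric positive semidefinite. -/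
open Matrix
open scoped Classical

lemma mlog_isSymm_s11 {d : ℕ} (A : Matrix (Fin d) (Fin d) ℝ) : (mlog A).IsSymm := by
  unfold mlog
  split
  next h => exact h.choose_spec.1
  next => exact Matrix.isSymm_zero

lemma gram_posSemidef {d n : ℕ} (L : Fin n → Matrix (Fin d) (Fin d) ℝ)
    (hL : ∀ i, (L i).IsSymm) :
    Matrix.PosSemidef (Matrix.of fun i j : Fin n => (L i * L j).trace) := by
  refine Matrix.PosSemidef.of_dotProduct_mulVec_nonneg ?_ ?_
  · ext i j
    simp only [Matrix.conjTranspose_apply, Matrix.of_apply, star_trivial]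
    exact Matrix.trace_mul_comm (L j) (L i)
  · intro x
    have key : (star x) ⬝ᵥ ((Matrix.of fun i j : Fin n => (L i * L j).trace) *ᵥ x)
        = ((∑ i, x i • L i)ᴴ * (∑ j, x j • L j)).trace := by
      simp only [dotProduct, Matrix.mulVec, dotProduct, Matrix.of_apply,
        star_trivial]
      rw [Matrix.conjTranspose_sum, Finset.sum_mul, Matrix.trace_sum]
      refine Finset.sum_congr rfl fun i _ => ?_
      rw [Matrix.mul_sum, Matrix.trace_sum, Finset.mul_sum]
      refine Finset.sum_congr rfl fun j _ => ?_
      rw [Matrix.conjTranspose_smul, Matrix.smul_mul, Matrix.mul_smul, Matrix.trace_smul,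
        Matrix.trace_smul]
      have : (L i)ᴴ = L i := by
        rw [Matrix.conjTranspose_eq_transpose_of_trivial, (hL i).eq]
      rw [this]
      simp only [star_trivial, smul_eq_mul]
      ring
    rw [key]
    rw [Matrix.trace]
    apply Finset.sum_nonneg
    intro j _
    rw [Matrix.diag_apply, Matrix.mul_apply]
    apply Finset.sum_nonneg
    intro i _
    simp only [Matrix.conjTranspose_apply, star_trivial]
    exact mul_self_nonneg _

/-- The Gram matrix of the LogEuclidean kernel `k_G` is symmetric positive
semidefinite. -/
theorem stmt11 (d n : ℕ) (G : Matrix (Fin d) (Fin d) ℝ) (hG : G.PosDef)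
    (X : Fin n → Matrix (Fin d) (Fin d) ℝ) (hX : ∀ i, (X i).PosDef) :
    Matrix.PosSemidef (Matrix.of fun i j : Fin n =>
      (mlog (minvsqrt G * X i * minvsqrt G) * mlog (minvsqrt G * X j * minvsqrt G)).trace) := by
  exact gram_posSemidef (fun i => mlog (minvsqrt G * X i * minvsqrt G)) (fun i => mlog_isSymm_s11 _)
end
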